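/- For γ₁, γ₂ ∈ ℂ, there exists an isomorphism of the type (iii) algebras A_{γ₁} and A_{γ₂} (a ℂ-linear bijection φ : A_{γ₁} → A_{γ₂} with φ(uv) = φ(u)φ(v) for all u,v) if and only if γ₂ = γ₁ or γ₂ = −γ₁. -/

import Mathlib

/-- `lpow μ x k` is the left-normed power `x^(k+1)`; so `lpow μ x 0 = x`,
`lpow μ x 1 = x·x = x²`, `lpow μ x 2 = x·x² = x³`, etc. -/
def lpow {A : Type*} [AddCommGroup A] [Module ℂ A]
    (μ : A →ₗ[ℂ] A →ₗ[ℂ] A) (x : A) : ℕ → A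
  | 0 => x
  | n + 1 => μ x (lpow μ x n)
/-- The 3-dimensional cyclic Leibniz algebra of type (iii) with parameter γ:
A_γ = ℂ³ with basis a = e₀, a² = e₁, a³ = e₂ and multiplication u·v = u₀ • L_a(v),
where L_a(a) = a², L_a(a²) = a³, L_a(a³) = a² + γa³ (so a²·v = a³·v = 0). -/
noncomputable def mulIII (γ : ℂ) : (Fin 3 → ℂ) →ₗ[ℂ] (Fin 3 → ℂ) →ₗ[ℂ] (Fin 3 → ℂ) :=
  (LinearMap.proj 0).smulRight (Matrix.mulVecLin !![0,0,0;1,0,1;0,1,γ])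

noncomputable def a : Fin 3 → ℂ := ![1,0,0]
noncomputable def a2 : Fin 3 → ℂ := ![0,1,0]
noncomputable def a3 : Fin 3 → ℂ := ![0,0,1]


lemma mulIII_apply (γ : ℂ) (u v : Fin 3 → ℂ) :
    mulIII γ u v = u 0 • ![0, v 0 + v 2, v 1 + γ * v 2] := by
  show u 0 • (!![0,0,0;1,0,1;0,1,γ]).mulVec v = _
  congr 1
  funext i
  fin_cases i <;>
    simp [Matrix.mulVec, dotProduct, Fin.sum_univ_three]

/-- the diag(-1,1,-1) equivalence -/
noncomputable def negφ : (Fin 3 → ℂ) ≃ₗ[ℂ] (Fin 3 → ℂ) :=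
  LinearEquiv.ofLinear
    (LinearMap.pi ![-LinearMap.proj 0, LinearMap.proj 1, -LinearMap.proj 2])
    (LinearMap.pi ![-LinearMap.proj 0, LinearMap.proj 1, -LinearMap.proj 2])
    (by ext v i; fin_cases i <;> simp [LinearMap.pi_apply])
    (by ext v i; fin_cases i <;> simp [LinearMap.pi_apply])

lemma negφ_apply (v : Fin 3 → ℂ) : negφ v = ![-v 0, v 1, -v 2] := by
  funext i
  fin_cases i <;> simp [negφ, LinearMap.pi_apply]

/-- The type (iii) algebras A_{γ₁} and A_{γ₂} are isomorphic (via a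
ℂ-linear bijection preserving the multiplication) iff γ₂ = γ₁ or γ₂ = −γ₁. -/
theorem typeIII_iso_iff (γ₁ γ₂ : ℂ) :
    (∃ φ : (Fin 3 → ℂ) ≃ₗ[ℂ] (Fin 3 → ℂ),
        ∀ u v : Fin 3 → ℂ, φ (mulIII γ₁ u v) = mulIII γ₂ (φ u) (φ v)) ↔
      (γ₂ = γ₁ ∨ γ₂ = -γ₁) := by
  constructor
  · rintro ⟨φ, hφ⟩
    set x : Fin 3 → ℂ := φ a with hx
    set y : Fin 3 → ℂ := φ a2 with hy
    set z : Fin 3 → ℂ := φ a3 with hz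
    -- step 1 : y 0 = 0
    have ha2v : ∀ v : Fin 3 → ℂ, mulIII γ₁ a2 v = 0 := by
      intro v; rw [mulIII_apply]; simp [a2]
    have hy0 : y 0 = 0 := by
      have h := hφ a2 (φ.symm a2)
      rw [ha2v, map_zero, LinearEquiv.apply_symm_apply, mulIII_apply] at h
      have h2 := congrFun h 2
      exact (by simpa [a2] using h2.symm : φ a2 0 = 0)
    -- relations
    have hav : ∀ v : Fin 3 → ℂ, mulIII γ₁ a v = ![0, v 0 + v 2, v 1 + γ₁ * v 2] := by
      intro v; rw [mulIII_apply]; simp [a]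
    have haa2 : mulIII γ₁ a a2 = a3 := by rw [hav]; funext i; fin_cases i <;> simp [a2, a3]
    have haa3 : mulIII γ₁ a a3 = a2 + γ₁ • a3 := by
      rw [hav]; funext i; fin_cases i <;> simp [a2, a3]
    set α : ℂ := x 0 with hα
    have R2 : z = α • ![0, y 0 + y 2, y 1 + γ₂ * y 2] := by
      have h := hφ a a2
      rw [haa2, mulIII_apply] at h
      rw [← hz, ← hy] at h; exact h
    have R3 : y + γ₁ • z = α • ![0, z 0 + z 2, z 1 + γ₂ * z 2] := by
      have h := hφ a a3
      rw [haa3, mulIII_apply, map_add, map_smul] at h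
      rw [← hz, ← hy] at h; exact h
    -- coordinate equations
    have hz0 : z 0 = 0 := by have := congrFun R2 0; simpa using this
    have hz1 : z 1 = α * (y 0 + y 2) := by have := congrFun R2 1; simpa using this
    have hz2 : z 2 = α * (y 1 + γ₂ * y 2) := by have := congrFun R2 2; simpa using this
    have e1 : y 1 + γ₁ * z 1 = α * (z 0 + z 2) := by
      have := congrFun R3 1; simpa [Pi.add_apply] using this
    have e2 : y 2 + γ₁ * z 2 = α * (z 1 + γ₂ * z 2) := by
      have := congrFun R3 2; simpa [Pi.add_apply] using this
    -- key vector identity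
    have key : (1 - α^2) • y + (γ₁ - α * γ₂) • z = 0 := by
      funext i
      fin_cases i
      · simp [hy0, hz0]
      · show (1 - α^2) * y 1 + (γ₁ - α * γ₂) * z 1 = 0
        rw [hz1] at e1 ⊢
        rw [hz0, hz2, hy0] at e1
        rw [hy0]
        linear_combination e1
      · show (1 - α^2) * y 2 + (γ₁ - α * γ₂) * z 2 = 0
        rw [hz2] at e2 ⊢
        rw [hz1] at e2
        rw [hy0] at *
        linear_combination e2
    -- pull back through φ
    have key2 : (1 - α^2) • a2 + (γ₁ - α * γ₂) • a3 = 0 := by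
      apply φ.injective
      rw [map_add, map_smul, map_smul, map_zero, ← hy, ← hz]
      exact key
    have c1 : 1 - α^2 = 0 := by have := congrFun key2 1; simpa [a2, a3] using this
    have c2 : γ₁ - α * γ₂ = 0 := by have := congrFun key2 2; simpa [a2, a3] using this
    have : (α - 1) * (α + 1) = 0 := by linear_combination -c1
    rcases mul_eq_zero.mp this with h | h
    · left
      linear_combination -c2 - γ₂ * h
    · right
      linear_combination c2 + γ₂ * h
  · rintro (rfl | rfl)
    · exact ⟨LinearEquiv.refl ℂ _, fun u v => rfl⟩
    · refine ⟨negφ, fun u v => ?_⟩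
      rw [mulIII_apply, map_smul, negφ_apply, negφ_apply, negφ_apply, mulIII_apply]
      funext i
      fin_cases i <;> simp <;> ring
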